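/- (Average of the tilt along a closed orbit.) Let γ ∈ (4/3, 2) and let (X(τ), Y(τ)) be a periodic solution of the planar tilt system with period P > 0 such that Y(τ) > 0 and 0 < X(τ)² + Y(τ) < 1 for all τ. Then the time average of X over one period equals the equilibrium value: (1/P)·∫₀^P X(τ) dτ = −√6(3γ−4)/(2(3−γ)). Consequently the average of T over one period equals 2(3γ−4)/(3−γ). -/

import Mathlib

noncomputable section

namespace CFTilt

/-- the function `T(X,Y)` on the Collinson-French background. -/
def Tpl (γ X Y : ℝ) : ℝ :=
  (((3*γ - 4) - (Real.sqrt 6/3)*(γ-1)*X) * (1 - X^2 - Y) + (2/3)*(2-γ)*X^2)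
    / (1 - (γ-1)*(X^2 + Y))

/-- right-hand side of `X' = (T - 2/3)X - (2√6/3)Y`. -/
def FX (γ X Y : ℝ) : ℝ := (Tpl γ X Y - 2/3)*X - (2*Real.sqrt 6/3)*Y

/-- right-hand side of `Y' = 2(T + (2√6/3)X)Y`. -/
def FY (γ X Y : ℝ) : ℝ := 2*(Tpl γ X Y + (2*Real.sqrt 6/3)*X)*Y

lemma key1 (γ x y : ℝ) (hy : y ≠ 0) :
    FY γ x y / y = 2*Tpl γ x y + (4*Real.sqrt 6/3)*x := by
  unfold FY; field_simp; ring

lemma key2 (γ x y : ℝ) (hW : 1 - x^2 - y ≠ 0) (hD : 1 - (γ-1)*(x^2+y) ≠ 0)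
    (h2 : (2:ℝ) - γ ≠ 0) :
    (-(2*x)*FX γ x y - FY γ x y) / (1 - x^2 - y)
      = (2*Tpl γ x y + (2*Real.sqrt 6*(γ-1)/3)*x - 2*(3*γ-4)) / (2-γ) := by
  have hT : Tpl γ x y * (1 - (γ-1)*(x^2+y))
      = ((3*γ - 4) - (Real.sqrt 6/3)*(γ-1)*x) * (1 - x^2 - y) + (2/3)*(2-γ)*x^2 := by
    unfold Tpl; field_simp
  rw [div_eq_div_iff hW h2]
  unfold FX FY
  linear_combination (-2 : ℝ) * hT

theorem average_tilt_on_closed_orbit (γ : ℝ) (h1 : 4/3 < γ) (h2 : γ < 2)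
    (X Y : ℝ → ℝ) (P : ℝ) (hP : 0 < P)
    (hX : ∀ τ : ℝ, HasDerivAt X (FX γ (X τ) (Y τ)) τ)
    (hY : ∀ τ : ℝ, HasDerivAt Y (FY γ (X τ) (Y τ)) τ)
    (hper : ∀ τ : ℝ, X (τ + P) = X τ ∧ Y (τ + P) = Y τ)
    (hreg : ∀ τ : ℝ, 0 < Y τ ∧ 0 < (X τ)^2 + Y τ ∧ (X τ)^2 + Y τ < 1) :
    (1/P) * (∫ τ in (0:ℝ)..P, X τ) = -Real.sqrt 6*(3*γ-4)/(2*(3-γ)) ∧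
    (1/P) * (∫ τ in (0:ℝ)..P, Tpl γ (X τ) (Y τ)) = 2*(3*γ-4)/(3-γ) := by
  have hs : Real.sqrt 6 ^ 2 = 6 := Real.sq_sqrt (by norm_num)
  have h2ne : (2:ℝ) - γ ≠ 0 := by linarith
  have hPne : P ≠ 0 := ne_of_gt hP
  have hYpos : ∀ τ, 0 < Y τ := fun τ => (hreg τ).1
  have hWpos : ∀ τ, 0 < 1 - (X τ)^2 - Y τ := fun τ => by
    have := (hreg τ).2.2; linarith
  have hDpos : ∀ τ, 0 < 1 - (γ-1)*((X τ)^2 + Y τ) := fun τ => by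
    have h := (hreg τ).2.2; have h' := (hreg τ).2.1; nlinarith
  -- continuity
  have hXc : Continuous X := continuous_iff_continuousAt.2 fun τ => (hX τ).continuousAt
  have hYc : Continuous Y := continuous_iff_continuousAt.2 fun τ => (hY τ).continuousAt
  have hTc : Continuous fun τ => Tpl γ (X τ) (Y τ) := by
    simp only [Tpl]
    exact Continuous.div (by fun_prop) (by fun_prop) fun τ => ne_of_gt (hDpos τ)
  -- derivative of log Y
  have hlog1 : ∀ τ, HasDerivAt (fun t => Real.log (Y t))
      (2*Tpl γ (X τ) (Y τ) + (4*Real.sqrt 6/3)*X τ) τ := fun τ => by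
    have := (hY τ).log (hYpos τ).ne'
    rwa [key1 γ _ _ (hYpos τ).ne'] at this
  -- derivative of W = 1 - X^2 - Y
  have hWd : ∀ τ, HasDerivAt (fun t => 1 - (X t)^2 - Y t)
      (-(2*X τ)*FX γ (X τ) (Y τ) - FY γ (X τ) (Y τ)) τ := fun τ => by
    have hx2 : HasDerivAt (fun t => (X t)^2) (2*X τ * FX γ (X τ) (Y τ)) τ := by
      have := (hX τ).pow 2
      exact this.congr_deriv (by push_cast; ring)
    have := ((hasDerivAt_const τ (1:ℝ)).sub hx2).sub (hY τ)
    exact this.congr_deriv (by ring)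
  have hlog2 : ∀ τ, HasDerivAt (fun t => Real.log (1 - (X t)^2 - Y t))
      ((2*Tpl γ (X τ) (Y τ) + (2*Real.sqrt 6*(γ-1)/3)*X τ - 2*(3*γ-4))/(2-γ)) τ := fun τ => by
    have := (hWd τ).log (hWpos τ).ne'
    rwa [key2 γ _ _ (hWpos τ).ne' (hDpos τ).ne' h2ne] at this
  -- integrabilities
  have hXi : IntervalIntegrable X MeasureTheory.volume 0 P := hXc.intervalIntegrable _ _
  have hTi : IntervalIntegrable (fun τ => Tpl γ (X τ) (Y τ)) MeasureTheory.volume 0 P :=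
    hTc.intervalIntegrable _ _
  set I := ∫ τ in (0:ℝ)..P, X τ with hIdef
  set J := ∫ τ in (0:ℝ)..P, Tpl γ (X τ) (Y τ) with hJdef
  -- first relation
  have hint1 : (∫ τ in (0:ℝ)..P, (2*Tpl γ (X τ) (Y τ) + (4*Real.sqrt 6/3)*X τ))
      = Real.log (Y P) - Real.log (Y 0) :=
    intervalIntegral.integral_eq_sub_of_hasDerivAt (fun τ _ => hlog1 τ)
      (((continuous_const.mul hTc).add (continuous_const.mul hXc)).intervalIntegrable _ _)
  have hYper : Y P = Y 0 := by have := (hper 0).2; rwa [zero_add] at this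
  rw [hYper, sub_self] at hint1
  rw [intervalIntegral.integral_add ((hTi.const_mul 2))
      (hXi.const_mul _), intervalIntegral.integral_const_mul,
      intervalIntegral.integral_const_mul] at hint1
  have e1 : 2*J + (4*Real.sqrt 6/3)*I = 0 := hint1
  -- second relation
  have hint2 : (∫ τ in (0:ℝ)..P,
        ((2*Tpl γ (X τ) (Y τ) + (2*Real.sqrt 6*(γ-1)/3)*X τ - 2*(3*γ-4))/(2-γ)))
      = Real.log (1 - (X P)^2 - Y P) - Real.log (1 - (X 0)^2 - Y 0) :=
    intervalIntegral.integral_eq_sub_of_hasDerivAt (fun τ _ => hlog2 τ)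
      ((((((continuous_const.mul hTc).add (continuous_const.mul hXc)).sub continuous_const).div_const
        _)).intervalIntegrable _ _)
  have hXper : X P = X 0 := by have := (hper 0).1; rwa [zero_add] at this
  rw [hXper, hYper, sub_self] at hint2
  rw [intervalIntegral.integral_div] at hint2
  have hint2' : (∫ τ in (0:ℝ)..P,
      (2*Tpl γ (X τ) (Y τ) + (2*Real.sqrt 6*(γ-1)/3)*X τ - 2*(3*γ-4))) = 0 := by
    rcases div_eq_zero_iff.mp hint2 with h | h
    · exact h
    · exact absurd h h2ne
  rw [intervalIntegral.integral_sub
        (((hTi.const_mul 2)).add (hXi.const_mul _)) intervalIntegrable_const,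
      intervalIntegral.integral_add ((hTi.const_mul 2)) (hXi.const_mul _),
      intervalIntegral.integral_const_mul, intervalIntegral.integral_const_mul,
      intervalIntegral.integral_const, smul_eq_mul, sub_zero] at hint2'
  have e2 : 2*J + (2*Real.sqrt 6*(γ-1)/3)*I - P*(2*(3*γ-4)) = 0 := hint2'
  -- solve the linear system
  have hI' : (2*(3-γ))*I = -(Real.sqrt 6)*(3*γ-4)*P := by
    linear_combination (Real.sqrt 6/2)*e1 - (Real.sqrt 6/2)*e2 - ((3-γ)*I/3)*hs
  have hJ' : (3-γ)*J = 2*(3*γ-4)*P := by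
    linear_combination ((3-γ)/2)*e1 - (Real.sqrt 6/3)*hI' + ((3*γ-4)*P/3)*hs
  have h3ne : (3:ℝ) - γ ≠ 0 := by linarith
  constructor
  · field_simp
    linear_combination hI'
  · field_simp
    linear_combination hJ'


end CFTilt
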